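/- Let C, w, n_max > 0 and ε ∈ (0, 10⁻³). Then there exists R₂ > 0, depending only on C, w and n_max, with the following property. Let R ≥ R₂ and let I be a closed interval of length R written as a union of finitely many closed subintervals with pairwise disjoint interiors, consisting of intervals J₁, …, J_{n₀} together with intervals J_i^{(p)} for 1 ≤ p ≤ m and 1 ≤ i ≤ n_p, where n_p ≤ n_max for every p; write P_b for the collection of all J_i^{(p)}. Assume: (1) ∑_{J ∈ P_b} ℓ(J) ≥ (1 − ε)·R, where ℓ(J) denotes the length of J; (2) whenever p ≠ q, the distance between J_i^{(p)} and J_j^{(q)} is at least max(R₂, C·min(ℓ(J_i^{(p)}), ℓ(J_j^{(q)}))^{1+w}). Then there exist p₀ ∈ {1, …, m} and i₀ ∈ {1, …, n_{p₀}} such that ℓ(J_{i₀}^{(p₀)}) ≥ R/(32·n_max) and ∑_{i=1}^{n_{p₀}} ℓ(J_i^{(p₀)}) ≥ (3/4)·R. -/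

import Mathlib

open MeasureTheory Set

set_option maxHeartbeats 1000000
open MeasureTheory Set

lemma count_sep {ι : Type*} (S : Finset ι) (x : ι → ℝ) (x₀ R g : ℝ) (hg : 0 < g) (hR : 0 ≤ R)
    (hmem : ∀ q ∈ S, x q ∈ Set.Icc x₀ (x₀ + R))
    (hsep : ∀ q ∈ S, ∀ r ∈ S, q ≠ r → g ≤ |x q - x r|) :
    (S.card : ℝ) * g ≤ R + g := by
  classical
  have hdisj : (S : Set ι).PairwiseDisjoint (fun q => Set.Ico (x q) (x q + g)) := by
    intro q hq r hr hqr
    have h := hsep q hq r hr hqr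
    simp only [Function.onFun]
    rw [Set.Ico_disjoint_Ico]
    rcases abs_cases (x q - x r) with ⟨h1, _⟩ | ⟨h1, _⟩
    · exact le_trans (min_le_right _ _) (le_trans (by linarith) (le_max_left _ _))
    · exact le_trans (min_le_left _ _) (le_trans (by linarith) (le_max_right _ _))
  have hsub : (⋃ q ∈ S, Set.Ico (x q) (x q + g)) ⊆ Set.Ico x₀ (x₀ + R + g) := by
    intro y hy
    simp only [Set.mem_iUnion, Set.mem_Ico] at hy ⊢
    obtain ⟨q, hq, h1, h2⟩ := hy
    have := hmem q hq
    simp only [Set.mem_Icc] at this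
    constructor <;> linarith [this.1, this.2]
  have hvol : volume (⋃ q ∈ S, Set.Ico (x q) (x q + g)) = S.card * ENNReal.ofReal g := by
    rw [measure_biUnion_finset hdisj (fun q _ => measurableSet_Ico)]
    simp [Real.volume_Ico]
  have hkey : (S.card : ENNReal) * ENNReal.ofReal g ≤ ENNReal.ofReal (R + g) := by
    have hle := (hvol ▸ measure_mono hsub)
    rwa [Real.volume_Ico, show x₀ + R + g - x₀ = R + g by ring] at hle
  rw [← ENNReal.ofReal_natCast, ← ENNReal.ofReal_mul (by positivity)] at hkey
  exact (ENNReal.ofReal_le_ofReal_iff (by positivity)).1 hkey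

lemma short_sum (C w nmax R₂ R x₀ : ℝ) (hC : 0 < C) (hw : 0 < w)
    (hn : 0 < nmax) (hR₂ : 0 < R₂) (hRR : R₂ ≤ R)
    {m : ℕ} {np : Fin m → ℕ} (hnp : ∀ p, (np p : ℝ) ≤ nmax)
    (a l : (p : Fin m) → (i : Fin (np p)) → ℝ)
    (hl0 : ∀ p i, 0 ≤ l p i)
    (ha : ∀ p i, a p i ∈ Set.Icc x₀ (x₀ + R))
    (hsep : ∀ p q : Fin m, p ≠ q → ∀ i j,
      max R₂ (C * min (l p i) (l q j) ^ (1 + w)) ≤ |a p i - a q j|)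
    (Q : Finset (Fin m))
    (hQ : ∀ q ∈ Q, ∀ i, l q i ≤ (R / C) ^ (1/(1+w))) :
    ∑ q ∈ Q, ∑ i, l q i ≤
      nmax * (4 + 2*(2:ℝ)^w*(2:ℝ)^w/((2:ℝ)^w - 1)) *
        (R / (C^(1/(1+w)) * R₂^(w/(1+w)))) := by
  classical
  have hR : 0 < R := lt_of_lt_of_le hR₂ hRR
  have h1w : (0:ℝ) < 1 + w := by linarith
  have h1w' : (1:ℝ) + w ≠ 0 := ne_of_gt h1w
  set lam : ℝ := (R / C) ^ (1/(1+w)) with hlamdef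
  set sig : ℝ := (R₂ / C) ^ (1/(1+w)) with hsigdef
  have hlam : 0 < lam := by positivity
  have hsig : 0 < sig := by positivity
  have hsiglam : sig ≤ lam :=
    Real.rpow_le_rpow (by positivity) (by gcongr) (by positivity)
  set x : ℝ := (2:ℝ) ^ w with hxdef
  have hx1 : 1 < x :=
    (Real.one_lt_rpow_iff_of_pos (by norm_num)).2 (Or.inl ⟨one_lt_two, hw⟩)
  have hx0 : 0 < x := lt_trans one_pos hx1
  set Y : ℝ := R / (C^(1/(1+w)) * R₂^(w/(1+w))) with hYdef
  have hCa : (0:ℝ) < C^(1/(1+w)) := by positivity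
  have hRb : (0:ℝ) < R₂^(w/(1+w)) := by positivity
  have hY : 0 < Y := by positivity
  clear_value lam sig x Y
  -- rpow algebra facts
  have hlampow : lam ^ (1+w) = R / C := by
    rw [hlamdef, ← Real.rpow_mul (by positivity), one_div_mul_cancel h1w', Real.rpow_one]
  have hexp : 1/(1+w) + w/(1+w) = 1 := by field_simp
  have hCsplit : C^(1/(1+w)) * C^(w/(1+w)) = C := by
    rw [← Real.rpow_add hC, hexp, Real.rpow_one]
  have hR₂split : R₂^(1/(1+w)) * R₂^(w/(1+w)) = R₂ := by
    rw [← Real.rpow_add hR₂, hexp, Real.rpow_one]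
  have hsigw : sig ^ w = R₂^(w/(1+w)) / C^(w/(1+w)) := by
    rw [hsigdef, ← Real.rpow_mul (by positivity), one_div_mul_eq_div,
      Real.div_rpow hR₂.le hC.le]
  have hsigeq : sig = R₂^(1/(1+w)) / C^(1/(1+w)) := by
    rw [hsigdef, Real.div_rpow hR₂.le hC.le]
  have hlameq : lam = R^(1/(1+w)) / C^(1/(1+w)) := by
    rw [hlamdef, Real.div_rpow hR.le hC.le]
  -- e1 : sig * (R/R₂) = Y
  have e1 : sig * (R/R₂) = Y := by
    rw [hsigeq, hYdef]
    rw [div_mul_div_comm, div_eq_div_iff (by positivity) (by positivity)]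
    linear_combination (R * C^(1/(1+w))) * hR₂split
  -- e2 : lam ≤ Y
  have e2 : lam ≤ Y := by
    rw [hlameq, hYdef, div_le_div_iff₀ (by positivity) (by positivity)]
    calc R^(1/(1+w)) * (C^(1/(1+w)) * R₂^(w/(1+w)))
        ≤ R^(1/(1+w)) * (C^(1/(1+w)) * R^(w/(1+w))) := by
          gcongr
      _ = R * C^(1/(1+w)) := by
          rw [show R^(1/(1+w)) * (C^(1/(1+w)) * R^(w/(1+w)))
              = (R^(1/(1+w)) * R^(w/(1+w))) * C^(1/(1+w)) by ring,
            ← Real.rpow_add hR, hexp, Real.rpow_one]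
  -- e3 : lam * (lam/sig)^w = Y
  have e3 : lam * (lam/sig)^w = Y := by
    rw [Real.div_rpow hlam.le hsig.le, hsigw]
    have hlw : lam * lam ^ w = R / C := by
      rw [← Real.rpow_one_add' hlam.le h1w']
      exact hlampow
    have hlw2 : lam * lam ^ w * C = R := by
      rw [hlw]; field_simp
    rw [hYdef]
    field_simp
    linear_combination (lam * lam^w) * hCsplit
      + hlw2
  
  -- class function
  set cls : ℝ → ℕ := fun s => ⌊Real.logb 2 (lam / s)⌋₊ with hclsdef
  have hcls_le : ∀ s : ℝ, 0 < s → s ≤ lam → s * 2^(cls s) ≤ lam := by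
    intro s hs hslam
    have h1 : (1:ℝ) ≤ lam / s := (one_le_div hs).2 hslam
    have h0 : 0 ≤ Real.logb 2 (lam / s) := Real.logb_nonneg one_lt_two h1
    have h2 : (2:ℝ)^(cls s) ≤ lam / s := by
      calc (2:ℝ)^(cls s) = (2:ℝ)^((cls s : ℝ)) := (Real.rpow_natCast 2 _).symm
        _ ≤ (2:ℝ)^(Real.logb 2 (lam/s)) := by
            exact (Real.rpow_le_rpow_left_iff one_lt_two).2 (Nat.floor_le h0)
        _ = lam / s := Real.rpow_logb two_pos (by norm_num) (by positivity)
    calc s * 2^(cls s) ≤ s * (lam / s) := by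
          exact mul_le_mul_of_nonneg_left h2 hs.le
      _ = lam := by field_simp
  have hcls_lt : ∀ s : ℝ, 0 < s → s ≤ lam → lam < s * 2^(cls s + 1) := by
    intro s hs hslam
    have h2 : lam / s < (2:ℝ)^(cls s + 1) := by
      calc lam / s = (2:ℝ)^(Real.logb 2 (lam/s)) :=
            (Real.rpow_logb two_pos (by norm_num) (by positivity)).symm
        _ < (2:ℝ)^(((cls s : ℝ)) + 1) := by
            exact (Real.rpow_lt_rpow_left_iff one_lt_two).2 (Nat.lt_floor_add_one _)
        _ = (2:ℝ)^(cls s + 1) := by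
            rw [← Real.rpow_natCast 2 (cls s + 1)]; push_cast; ring_nf
    have h3 := (div_lt_iff₀ hs).1 h2
    linarith
  set K : ℕ := cls sig + 1 with hKdef
  have hKa : lam < sig * 2^K := hcls_lt sig hsig hsiglam
  have hKb : (2:ℝ)^K ≤ 2 * (lam / sig) := by
    have h1 := hcls_le sig hsig hsiglam
    have h2 : (2:ℝ)^(cls sig) ≤ lam / sig := by
      rw [le_div_iff₀ hsig]; linarith [h1]
    rw [hKdef, pow_succ]
    linarith
  -- pointwise split
  have hsum_split : ∑ q ∈ Q, ∑ i, l q i =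
      (∑ q ∈ Q, ∑ i, if l q i ≤ sig then l q i else 0)
      + (∑ q ∈ Q, ∑ i, if sig < l q i then l q i else 0) := by
    rw [← Finset.sum_add_distrib]
    apply Finset.sum_congr rfl
    intro q hq
    rw [← Finset.sum_add_distrib]
    apply Finset.sum_congr rfl
    intro i _
    by_cases h : l q i ≤ sig
    · rw [if_pos h, if_neg (not_lt.2 h), add_zero]
    · rw [if_neg h, if_pos (lt_of_not_ge h), zero_add]
  -- T1
  set P1 : Fin m → Prop := fun q => ∃ i, 0 < l q i ∧ l q i ≤ sig with hP1def
  set F1 := Q.filter P1 with hF1def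
  set x1 : Fin m → ℝ := fun q => if h : P1 q then a q h.choose else 0 with hx1def
  have hx1mem : ∀ q, (h : P1 q) → x1 q = a q h.choose := by
    intro q h; rw [hx1def]; simp only [dif_pos h]
  have hF1card : (F1.card : ℝ) * R₂ ≤ R + R₂ := by
    apply count_sep F1 x1 x₀ R R₂ hR₂ hR.le
    · intro q hq
      have hP : P1 q := (Finset.mem_filter.1 hq).2
      rw [hx1mem q hP]; exact ha q _
    · intro q hq r hr hqr
      have hPq : P1 q := (Finset.mem_filter.1 hq).2
      have hPr : P1 r := (Finset.mem_filter.1 hr).2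
      rw [hx1mem q hPq, hx1mem r hPr]
      exact le_trans (le_max_left _ _) (hsep q r hqr _ _)
  have hT1 : (∑ q ∈ Q, ∑ i, if l q i ≤ sig then l q i else 0)
      ≤ (R / R₂ + 1) * (nmax * sig) := by
    have h0 : ∀ q ∈ Q, q ∉ F1 → (∑ i, if l q i ≤ sig then l q i else 0) = 0 := by
      intro q hq hnq
      have hnP : ¬ P1 q := fun h => hnq (by rw [hF1def]; exact Finset.mem_filter.2 ⟨hq, h⟩)
      apply Finset.sum_eq_zero
      intro i _
      by_cases h : l q i ≤ sig
      · rw [if_pos h]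
        by_contra hne
        exact hnP ⟨i, lt_of_le_of_ne (hl0 q i) (Ne.symm hne), h⟩
      · rw [if_neg h]
    rw [← Finset.sum_subset (Finset.filter_subset P1 Q) h0]
    calc ∑ q ∈ F1, ∑ i, (if l q i ≤ sig then l q i else 0)
        ≤ ∑ _q ∈ F1, nmax * sig := by
          apply Finset.sum_le_sum
          intro q hq
          calc (∑ i, if l q i ≤ sig then l q i else 0) ≤ ∑ _i : Fin (np q), sig := by
                apply Finset.sum_le_sum
                intro i _
                by_cases h : l q i ≤ sig
                · rw [if_pos h]; exact h
                · rw [if_neg h]; exact hsig.le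
            _ = (np q : ℝ) * sig := by
                rw [Finset.sum_const, Finset.card_univ, Fintype.card_fin, nsmul_eq_mul]
            _ ≤ nmax * sig := mul_le_mul_of_nonneg_right (hnp q) hsig.le
      _ = (F1.card : ℝ) * (nmax * sig) := by rw [Finset.sum_const, nsmul_eq_mul]
      _ ≤ (R / R₂ + 1) * (nmax * sig) := by
          apply mul_le_mul_of_nonneg_right _ (by positivity)
          have h2 : (F1.card : ℝ) ≤ (R + R₂)/R₂ := (le_div_iff₀ hR₂).2 hF1card
          have h3 : (R + R₂)/R₂ = R/R₂ + 1 := by field_simp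
          linarith
  -- T2
  set P2 : ℕ → Fin m → Prop := fun k q => ∃ i, sig < l q i ∧ cls (l q i) = k with hP2def
  set F2 : ℕ → Finset (Fin m) := fun k => Q.filter (P2 k) with hF2def
  set x2 : ℕ → Fin m → ℝ := fun k q => if h : P2 k q then a q h.choose else 0 with hx2def
  have hx2mem : ∀ k q, (h : P2 k q) → x2 k q = a q h.choose := by
    intro k q h; rw [hx2def]; simp only [dif_pos h]
  have hexpand : ∀ q ∈ Q, ∀ i : Fin (np q), (if sig < l q i then l q i else 0)
      = ∑ k ∈ Finset.range K, if (sig < l q i ∧ cls (l q i) = k) then l q i else 0 := by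
    intro q hq i
    by_cases h : sig < l q i
    · have hlq : l q i ≤ lam := hQ q hq i
      have hclsK : cls (l q i) < K := by
        have h1 := hcls_le (l q i) (lt_trans hsig h) hlq
        have hp : (0:ℝ) < 2^(cls (l q i)) := by positivity
        have h3 : sig * 2^(cls (l q i)) < sig * 2^K := by nlinarith
        have h2 : (2:ℝ)^(cls (l q i)) < 2^K := by
          have := (mul_lt_mul_iff_right₀ hsig).1 h3
          exact this
        exact (pow_lt_pow_iff_right₀ one_lt_two).1 h2
      have hco : ∀ k, (if (sig < l q i ∧ cls (l q i) = k) then l q i else 0)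
           = if cls (l q i) = k then l q i else 0 := fun k => by
        by_cases hk : cls (l q i) = k
        · rw [if_pos ⟨h, hk⟩, if_pos hk]
        · rw [if_neg (fun hc => hk hc.2), if_neg hk]
      rw [if_pos h]
      simp_rw [hco]
      rw [Finset.sum_ite_eq (Finset.range K) (cls (l q i)) (fun _ => l q i)]
      rw [if_pos (Finset.mem_range.2 hclsK)]
    · rw [if_neg h]
      symm
      apply Finset.sum_eq_zero
      intro k _
      rw [if_neg (fun hc => h hc.1)]
  have hT2split : (∑ q ∈ Q, ∑ i, if sig < l q i then l q i else 0)
      = ∑ k ∈ Finset.range K, ∑ q ∈ Q, ∑ i,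
          if (sig < l q i ∧ cls (l q i) = k) then l q i else 0 := by
    rw [Finset.sum_comm]
    apply Finset.sum_congr rfl
    intro q hq
    calc (∑ i, if sig < l q i then l q i else 0)
        = ∑ i, ∑ k ∈ Finset.range K,
            (if (sig < l q i ∧ cls (l q i) = k) then l q i else 0) :=
          Finset.sum_congr rfl (fun i _ => hexpand q hq i)
      _ = _ := Finset.sum_comm
  have hclass : ∀ k : ℕ, (∑ q ∈ Q, ∑ i, if (sig < l q i ∧ cls (l q i) = k) then l q i else 0)
      ≤ (((2:ℝ)^(k+1))^(1+w) + 1) * (nmax * (lam / 2^k)) := by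
    intro k
    set gk : ℝ := R / ((2:ℝ)^(k+1))^(1+w) with hgkdef
    have hgk : 0 < gk := by positivity
    have hcard : ((F2 k).card : ℝ) * gk ≤ R + gk := by
      apply count_sep (F2 k) (x2 k) x₀ R gk hgk hR.le
      · intro q hq
        have hP : P2 k q := (Finset.mem_filter.1 hq).2
        rw [hx2mem k q hP]; exact ha q _
      · intro q hq r hr hqr
        have hPq : P2 k q := (Finset.mem_filter.1 hq).2
        have hPr : P2 k r := (Finset.mem_filter.1 hr).2
        have hQq : q ∈ Q := (Finset.mem_filter.1 hq).1
        have hQr : r ∈ Q := (Finset.mem_filter.1 hr).1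
        rw [hx2mem k q hPq, hx2mem k r hPr]
        refine le_trans ?_ (hsep q r hqr _ _)
        refine le_trans ?_ (le_max_right _ _)
        obtain ⟨hq1, hq2⟩ := hPq.choose_spec
        obtain ⟨hr1, hr2⟩ := hPr.choose_spec
        have hqlow : lam / 2^(k+1) < l q hPq.choose := by
          have := hcls_lt (l q hPq.choose) (lt_trans hsig hq1) (hQ q hQq _)
          rw [hq2] at this
          rw [div_lt_iff₀ (by positivity)]
          linarith
        have hrlow : lam / 2^(k+1) < l r hPr.choose := by
          have := hcls_lt (l r hPr.choose) (lt_trans hsig hr1) (hQ r hQr _)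
          rw [hr2] at this
          rw [div_lt_iff₀ (by positivity)]
          linarith
        have hmin : lam / 2^(k+1) ≤ min (l q hPq.choose) (l r hPr.choose) :=
          le_min hqlow.le hrlow.le
        have h0 : (0:ℝ) ≤ lam / 2^(k+1) := by positivity
        calc gk = C * (lam / 2^(k+1))^(1+w) := by
              rw [hgkdef, Real.div_rpow hlam.le (by positivity), hlampow]
              field_simp
          _ ≤ C * (min (l q hPq.choose) (l r hPr.choose))^(1+w) := by
              apply mul_le_mul_of_nonneg_left _ hC.le
              exact Real.rpow_le_rpow h0 hmin (by positivity)
    have hcardD : ((F2 k).card : ℝ) ≤ ((2:ℝ)^(k+1))^(1+w) + 1 := by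
      have h2 : ((F2 k).card : ℝ) ≤ (R + gk)/gk := (le_div_iff₀ hgk).2 hcard
      have h3 : (R + gk)/gk = R/gk + 1 := by field_simp
      have h4 : R / gk = ((2:ℝ)^(k+1))^(1+w) := by
        rw [hgkdef]
        rw [div_div_eq_mul_div, div_eq_iff (ne_of_gt hR)]
        ring
      linarith
    have hbound : ∀ q ∈ Q, (∑ i, if (sig < l q i ∧ cls (l q i) = k) then l q i else 0)
        ≤ nmax * (lam / 2^k) := by
      intro q hq
      calc _ ≤ ∑ _i : Fin (np q), (lam / 2^k) := by
            apply Finset.sum_le_sum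
            intro i _
            by_cases h : sig < l q i ∧ cls (l q i) = k
            · rw [if_pos h]
              have h1 := hcls_le (l q i) (lt_trans hsig h.1) (hQ q hq i)
              rw [h.2] at h1
              rw [le_div_iff₀ (by positivity)]
              linarith
            · rw [if_neg h]; positivity
        _ = (np q : ℝ) * (lam / 2^k) := by
            rw [Finset.sum_const, Finset.card_univ, Fintype.card_fin, nsmul_eq_mul]
        _ ≤ nmax * (lam / 2^k) :=
            mul_le_mul_of_nonneg_right (hnp q) (by positivity)
    have h0 : ∀ q ∈ Q, q ∉ F2 k →
        (∑ i, if (sig < l q i ∧ cls (l q i) = k) then l q i else 0) = 0 := by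
      intro q hq hnq
      have hnP : ¬ P2 k q := fun h => hnq (by
        rw [hF2def]; exact Finset.mem_filter.2 ⟨hq, h⟩)
      apply Finset.sum_eq_zero
      intro i _
      rw [if_neg (fun hc => hnP ⟨i, hc⟩)]
    rw [← Finset.sum_subset (Finset.filter_subset (P2 k) Q) h0]
    calc (∑ q ∈ Q.filter (P2 k), ∑ i, if (sig < l q i ∧ cls (l q i) = k) then l q i else 0)
        ≤ ∑ q ∈ Q.filter (P2 k), nmax * (lam/2^k) :=
          Finset.sum_le_sum (fun q hq => hbound q (Finset.mem_filter.1 hq).1)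
      _ = ((F2 k).card : ℝ) * (nmax * (lam/2^k)) := by
          rw [Finset.sum_const, nsmul_eq_mul, hF2def]
      _ ≤ (((2:ℝ)^(k+1))^(1+w) + 1) * (nmax * (lam / 2^k)) :=
          mul_le_mul_of_nonneg_right hcardD (by positivity)
  -- geometric estimates
  have hterm : ∀ k : ℕ, ((2:ℝ)^(k+1))^(1+w) * (lam / 2^k) = 2 * x * lam * x^k := by
    intro k
    have hp2 : ((2:ℝ)^(k+1) : ℝ)^w = x^(k+1) := by
      rw [hxdef, ← Real.rpow_natCast 2 (k+1), ← Real.rpow_natCast ((2:ℝ)^w) (k+1),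
        ← Real.rpow_mul (by norm_num : (0:ℝ) ≤ 2),
        ← Real.rpow_mul (by norm_num : (0:ℝ) ≤ 2), mul_comm]
    have hp1 : ((2:ℝ)^(k+1))^(1+w) = 2^(k+1) * x^(k+1) := by
      rw [Real.rpow_add (by positivity), Real.rpow_one, hp2]
    rw [hp1, pow_succ, pow_succ]
    have h2k : ((2:ℝ)^k) ≠ 0 := by positivity
    field_simp
  have hgeom : ∑ k ∈ Finset.range K, x^k ≤ x * (lam/sig)^w / (x - 1) := by
    have hxKeq : x^K = ((2:ℝ)^K)^w := by
      rw [hxdef, ← Real.rpow_natCast 2 K, ← Real.rpow_natCast ((2:ℝ)^w) K,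
        ← Real.rpow_mul (by norm_num : (0:ℝ) ≤ 2),
        ← Real.rpow_mul (by norm_num : (0:ℝ) ≤ 2), mul_comm]
    have hxK : x^K ≤ x * (lam/sig)^w := by
      rw [hxKeq]
      calc ((2:ℝ)^K)^w ≤ (2*(lam/sig))^w :=
            Real.rpow_le_rpow (by positivity) hKb hw.le
        _ = x * (lam/sig)^w := by
            rw [Real.mul_rpow (by norm_num) (by positivity), hxdef]
    rw [geom_sum_eq (ne_of_gt hx1) K]
    apply (div_le_div_iff_of_pos_right (by linarith)).2
    linarith
  have hhalf : ∑ k ∈ Finset.range K, ((1:ℝ)/2)^k ≤ 2 := by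
    rw [geom_sum_eq (by norm_num : (1/2:ℝ) ≠ 1) K]
    have h1 : (0:ℝ) ≤ (1/2:ℝ)^K := by positivity
    have h2 : ((1/2:ℝ)^K - 1)/((1/2:ℝ) - 1) = 2 - 2*(1/2:ℝ)^K := by
      field_simp; ring
    rw [h2]
    linarith
  have hT2 : (∑ q ∈ Q, ∑ i, if sig < l q i then l q i else 0)
      ≤ nmax * ((2*x*lam) * (x * (lam/sig)^w / (x - 1)) + lam * 2) := by
    rw [hT2split]
    calc (∑ k ∈ Finset.range K, ∑ q ∈ Q, ∑ i,
            if (sig < l q i ∧ cls (l q i) = k) then l q i else 0)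
        ≤ ∑ k ∈ Finset.range K, (((2:ℝ)^(k+1))^(1+w) + 1) * (nmax * (lam / 2^k)) :=
          Finset.sum_le_sum (fun k _ => hclass k)
      _ = nmax * ((2*x*lam) * (∑ k ∈ Finset.range K, x^k)
            + lam * (∑ k ∈ Finset.range K, ((1:ℝ)/2)^k)) := by
          rw [Finset.mul_sum, Finset.mul_sum, ← Finset.sum_add_distrib, Finset.mul_sum]
          apply Finset.sum_congr rfl
          intro k _
          have := hterm k
          have hhk : lam / 2^k = lam * (1/2:ℝ)^k := by
            rw [div_pow, one_pow]; ring
          rw [← hhk]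
          nlinarith [hterm k]
      _ ≤ nmax * ((2*x*lam) * (x * (lam/sig)^w / (x - 1)) + lam * 2) := by
          apply mul_le_mul_of_nonneg_left _ hn.le
          have hxl : 0 ≤ 2*x*lam := by positivity
          have := mul_le_mul_of_nonneg_left hgeom hxl
          have := mul_le_mul_of_nonneg_left hhalf hlam.le
          linarith
  -- final assembly
  rw [hsum_split]
  have hsigY : sig ≤ Y := le_trans hsiglam e2
  have hT1' : (∑ q ∈ Q, ∑ i, if l q i ≤ sig then l q i else 0) ≤ nmax * (Y + Y) := by
    refine le_trans hT1 ?_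
    have heq : (R / R₂ + 1) * (nmax * sig) = nmax * (sig * (R/R₂) + sig) := by ring
    rw [heq, e1]
    have := mul_le_mul_of_nonneg_left hsigY hn.le
    nlinarith [hn.le, hsigY]
  have hT2' : (∑ q ∈ Q, ∑ i, if sig < l q i then l q i else 0)
      ≤ nmax * ((2*x*x/(x-1)) * Y + 2 * Y) := by
    refine le_trans hT2 ?_
    have heq : (2*x*lam) * (x * (lam/sig)^w / (x - 1))
        = (2*x*x/(x-1)) * (lam * (lam/sig)^w) := by
      field_simp
    rw [heq, e3]
    have h2l : lam * 2 ≤ 2 * Y := by linarith [e2]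
    nlinarith [hn.le]
  calc (∑ q ∈ Q, ∑ i, if l q i ≤ sig then l q i else 0)
      + (∑ q ∈ Q, ∑ i, if sig < l q i then l q i else 0)
      ≤ nmax * (Y + Y) + nmax * ((2*x*x/(x-1)) * Y + 2 * Y) := by
        exact add_le_add hT1' hT2'
    _ = nmax * (4 + 2*x*x/(x-1)) * Y := by ring

/-- Combinatorial lemma on families of good intervals (Lemma 4.3). The interval
`I = [x₀, x₀ + R]` is partitioned into closed intervals with pairwise disjoint interiors:
the "bad" intervals `J i` and the "good" families `Jb p i` (`1 ≤ p ≤ m`, `i < np p ≤ n_max`).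
If the good intervals cover at least `(1−ε)R` of `I` and good intervals from different
families are far apart, then some family contains an interval of length `≥ R/(32 n_max)`
and that family covers at least `(3/4)R`. -/
theorem combinatorial_interval_lemma
    (C w nmax : ℝ) (hC : 0 < C) (hw : 0 < w) (hnmax : 0 < nmax) :
    ∃ R₂ : ℝ, 0 < R₂ ∧
      ∀ ε : ℝ, ε ∈ Set.Ioo (0 : ℝ) (1 / 1000) →
      ∀ R x₀ : ℝ, R₂ ≤ R →
      ∀ (n₀ m : ℕ) (np : Fin m → ℕ)
        (J : Fin n₀ → Set ℝ) (Jb : (p : Fin m) → Fin (np p) → Set ℝ),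
        (∀ p, (np p : ℝ) ≤ nmax) →
        (∀ i, ∃ a b : ℝ, a ≤ b ∧ J i = Icc a b) →
        (∀ p i, ∃ a b : ℝ, a ≤ b ∧ Jb p i = Icc a b) →
        ((⋃ i, J i) ∪ (⋃ p, ⋃ i, Jb p i) = Icc x₀ (x₀ + R)) →
        (∀ i j, i ≠ j → Disjoint (interior (J i)) (interior (J j))) →
        (∀ (p q : Fin m) (i : Fin (np p)) (j : Fin (np q)),
          (Sigma.mk p i : Σ p, Fin (np p)) ≠ Sigma.mk q j →
          Disjoint (interior (Jb p i)) (interior (Jb q j))) →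
        (∀ (i : Fin n₀) (p : Fin m) (j : Fin (np p)),
          Disjoint (interior (J i)) (interior (Jb p j))) →
        ((1 - ε) * R ≤ ∑ p : Fin m, ∑ i : Fin (np p), (volume (Jb p i)).toReal) →
        (∀ p q : Fin m, p ≠ q → ∀ (i : Fin (np p)) (j : Fin (np q)),
          ∀ x ∈ Jb p i, ∀ y ∈ Jb q j,
            max R₂
              (C * (min (volume (Jb p i)).toReal (volume (Jb q j)).toReal) ^ (1 + w))
              ≤ |x - y|) →
        ∃ (p₀ : Fin m) (i₀ : Fin (np p₀)),
          R / (32 * nmax) ≤ (volume (Jb p₀ i₀)).toReal ∧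
          (3 / 4 : ℝ) * R ≤ ∑ i : Fin (np p₀), (volume (Jb p₀ i)).toReal := by
  classical
  have h1w : (0:ℝ) < 1 + w := by linarith
  have h1w' : (1:ℝ) + w ≠ 0 := ne_of_gt h1w
  have hw' : w ≠ 0 := ne_of_gt hw
  have hx1 : 1 < (2:ℝ)^w :=
    (Real.one_lt_rpow_iff_of_pos (by norm_num)).2 (Or.inl ⟨one_lt_two, hw⟩)
  have hxm : (0:ℝ) < (2:ℝ)^w - 1 := by linarith
  set Kc : ℝ := 4 + 2*(2:ℝ)^w*(2:ℝ)^w/((2:ℝ)^w - 1) with hKcdef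
  have hKc : 0 < Kc := by
    have h1 : 0 < 2*(2:ℝ)^w*(2:ℝ)^w/((2:ℝ)^w - 1) := div_pos (by positivity) hxm
    rw [hKcdef]; linarith
  have hbase : 0 < 5 * nmax * Kc / C^(1/(1+w)) := by positivity
  set B : ℝ := (5 * nmax * Kc / C^(1/(1+w)))^((1+w)/w) with hBdef
  have hB0 : 0 ≤ B := by rw [hBdef]; positivity
  set R₂ : ℝ := max 1 B with hR₂def
  have hR₂1 : (1:ℝ) ≤ R₂ := le_max_left _ _
  have hR₂0 : (0:ℝ) < R₂ := lt_of_lt_of_le one_pos hR₂1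
  have hR₂pow : 5 * nmax * Kc ≤ C^(1/(1+w)) * R₂^(w/(1+w)) := by
    have hBpow : B^(w/(1+w)) = 5*nmax*Kc/C^(1/(1+w)) := by
      rw [hBdef, ← Real.rpow_mul hbase.le,
        show ((1+w)/w) * (w/(1+w)) = 1 by field_simp, Real.rpow_one]
    have h2 : B^(w/(1+w)) ≤ R₂^(w/(1+w)) :=
      Real.rpow_le_rpow hB0 (le_max_right _ _) (by positivity)
    rw [hBpow] at h2
    have h3 : C^(1/(1+w)) * (5*nmax*Kc/C^(1/(1+w))) = 5*nmax*Kc := by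
      field_simp
    calc 5*nmax*Kc = C^(1/(1+w)) * (5*nmax*Kc/C^(1/(1+w))) := h3.symm
      _ ≤ C^(1/(1+w)) * R₂^(w/(1+w)) := by
          apply mul_le_mul_of_nonneg_left h2 (by positivity)
  refine ⟨R₂, hR₂0, ?_⟩
  intro ε hε R x₀ hRge n₀ m np J Jb hnp hJex hJbex hunion hJdis hJbdis hJJbdis hsum hdist
  obtain ⟨hε0, hε1⟩ := hε
  have hR : 0 < R := lt_of_lt_of_le hR₂0 hRge
  choose av bv hab hJbeq using hJbex
  set l : (p : Fin m) → Fin (np p) → ℝ := fun p i => bv p i - av p i with hldef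
  have hvol : ∀ p i, (volume (Jb p i)).toReal = l p i := by
    intro p i
    rw [hJbeq p i, Real.volume_Icc, ENNReal.toReal_ofReal (by linarith [hab p i])]
  have hl0 : ∀ p i, 0 ≤ l p i := fun p i => by
    rw [hldef]; simp only; linarith [hab p i]
  have hsub : ∀ p i, Jb p i ⊆ Set.Icc x₀ (x₀ + R) := by
    intro p i y hy
    rw [← hunion]
    exact Or.inr (Set.mem_iUnion.2 ⟨p, Set.mem_iUnion.2 ⟨i, hy⟩⟩)
  have hmem_a : ∀ p i, av p i ∈ Set.Icc x₀ (x₀+R) := fun p i =>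
    hsub p i (by rw [hJbeq p i]; exact Set.left_mem_Icc.2 (hab p i))
  have hsep : ∀ p q : Fin m, p ≠ q → ∀ i j,
      max R₂ (C * (min (l p i) (l q j))^(1+w)) ≤ |av p i - av q j| := by
    intro p q hpq i j
    have h := hdist p q hpq i j (av p i)
      (by rw [hJbeq p i]; exact Set.left_mem_Icc.2 (hab p i)) (av q j)
      (by rw [hJbeq q j]; exact Set.left_mem_Icc.2 (hab q j))
    rwa [hvol, hvol] at h
  have hsum' : (1-ε)*R ≤ ∑ p, ∑ i, l p i := by
    refine le_trans hsum (le_of_eq ?_)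
    exact Finset.sum_congr rfl (fun p _ => Finset.sum_congr rfl (fun i _ => hvol p i))
  set lam : ℝ := (R/C)^(1/(1+w)) with hlamdef
  have hlam : 0 < lam := by positivity
  have hlampow : lam^(1+w) = R/C := by
    rw [hlamdef, ← Real.rpow_mul (by positivity), one_div_mul_cancel h1w', Real.rpow_one]
  have hεR : ε*R < (1/1000)*R := mul_lt_mul_of_pos_right hε1 hR
  have hkey : ∀ Q : Finset (Fin m), (∀ q ∈ Q, ∀ i, l q i ≤ lam) →
      (∑ q ∈ Q, ∑ i, l q i) ≤ R/5 := by
    intro Q hQ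
    have h := short_sum C w nmax R₂ R x₀ hC hw hnmax hR₂0 hRge hnp av l hl0
      (fun p i => hmem_a p i) hsep Q hQ
    rw [← hKcdef] at h
    refine le_trans h ?_
    have hfrac : R / (C^(1/(1+w)) * R₂^(w/(1+w))) ≤ R / (5*nmax*Kc) := by
      apply div_le_div_of_nonneg_left hR.le (by positivity) hR₂pow
    calc nmax * Kc * (R / (C^(1/(1+w)) * R₂^(w/(1+w))))
        ≤ nmax * Kc * (R / (5*nmax*Kc)) := by
          apply mul_le_mul_of_nonneg_left hfrac (by positivity)
      _ = R/5 := by field_simp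
  by_cases hlong : ∃ p i, lam < l p i
  · obtain ⟨p₀, i₁, hp₀⟩ := hlong
    have hshort : ∀ q ∈ Finset.univ.erase p₀, ∀ i, l q i ≤ lam := by
      intro q hq i
      have hqne : q ≠ p₀ := (Finset.mem_erase.1 hq).1
      by_contra hgt
      push_neg at hgt
      have hd := hsep q p₀ hqne i i₁
      have h1 := hmem_a q i
      have h2 := hmem_a p₀ i₁
      rw [Set.mem_Icc] at h1 h2
      have habs : |av q i - av p₀ i₁| ≤ R := by
        rw [abs_sub_le_iff]; constructor <;> linarith
      have hmin : lam < min (l q i) (l p₀ i₁) := lt_min hgt hp₀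
      have h3 : lam^(1+w) < (min (l q i) (l p₀ i₁))^(1+w) :=
        Real.rpow_lt_rpow hlam.le hmin h1w
      have h4 : C * lam^(1+w) = R := by
        rw [hlampow]; field_simp
      have hpow : R < C * (min (l q i) (l p₀ i₁))^(1+w) := by nlinarith
      have hchain := le_trans (le_trans (le_max_right R₂ _) hd) habs
      linarith
    have hrest := hkey (Finset.univ.erase p₀) hshort
    have htot : (∑ p, ∑ i, l p i)
        = (∑ i, l p₀ i) + ∑ q ∈ Finset.univ.erase p₀, ∑ i, l q i :=
      (Finset.add_sum_erase _ _ (Finset.mem_univ p₀)).symm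
    have hp₀sum : 3/4 * R ≤ ∑ i, l p₀ i := by linarith
    have hne : (Finset.univ : Finset (Fin (np p₀))).Nonempty := by
      by_contra h
      rw [Finset.not_nonempty_iff_eq_empty] at h
      rw [h, Finset.sum_empty] at hp₀sum
      nlinarith
    obtain ⟨i₀, _, hmax⟩ := Finset.exists_max_image Finset.univ (l p₀) hne
    have hsumle : (∑ i, l p₀ i) ≤ (np p₀ : ℝ) * l p₀ i₀ := by
      calc (∑ i, l p₀ i) ≤ ∑ _i : Fin (np p₀), l p₀ i₀ :=
            Finset.sum_le_sum (fun i _ => hmax i (Finset.mem_univ i))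
        _ = (np p₀ : ℝ) * l p₀ i₀ := by
            rw [Finset.sum_const, Finset.card_univ, Fintype.card_fin, nsmul_eq_mul]
    refine ⟨p₀, i₀, ?_, ?_⟩
    · rw [hvol]
      have h1 : (np p₀ : ℝ) ≤ nmax := hnp p₀
      have h2 : 3/4*R ≤ nmax * l p₀ i₀ := by
        refine le_trans hp₀sum (le_trans hsumle ?_)
        apply mul_le_mul_of_nonneg_right h1 (hl0 p₀ i₀)
      rw [div_le_iff₀ (by positivity)]
      nlinarith [hR.le]
    · rw [show (∑ i, (volume (Jb p₀ i)).toReal) = ∑ i, l p₀ i from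
        Finset.sum_congr rfl (fun i _ => hvol p₀ i)]
      exact hp₀sum
  · exfalso
    push_neg at hlong
    have h := hkey Finset.univ (fun q _ i => hlong q i)
    have he : (1-ε)*R = R - ε*R := by ring
    linarith
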